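/- Distributional chaos of type 1 implies distributional chaos in a sequence: if f : X → X on a compact metric space has an uncountable set D such that every pair (x,y) of distinct points of D satisfies F*_{xy} ≡ 1 and F_{xy}(s) = 0 for some s > 0, then there exists an increasing sequence (p_k) of positive integers and an uncountable set D' such that every pair of distinct points of D' is distributionally chaotic with respect to (p_k). -/

import Mathlib

open Filter

private lemma count_shift_eq (Q : ℕ → Prop) [DecidablePred Q] (n : ℕ) :
    ((Finset.Icc 1 n).filter (fun k => Q (k+1))).card
      = ((Finset.Icc 2 (n+1)).filter Q).card := by
  apply Finset.card_bij (fun k _ => k + 1)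
  · intro k hk
    simp only [Finset.mem_filter, Finset.mem_Icc] at hk ⊢
    exact ⟨⟨by omega, by omega⟩, hk.2⟩
  · intro a _ b _ h; omega
  · intro j hj
    simp only [Finset.mem_filter, Finset.mem_Icc] at hj
    refine ⟨j - 1, ?_, by omega⟩
    simp only [Finset.mem_filter, Finset.mem_Icc]
    have hrw : j - 1 + 1 = j := by omega
    exact ⟨⟨by omega, by omega⟩, hrw ▸ hj.2⟩

private lemma count_upper (Q : ℕ → Prop) [DecidablePred Q] (n : ℕ) :
    ((Finset.range (n+2)).filter Q).card
      ≤ ((Finset.Icc 1 n).filter (fun k => Q (k+1))).card + 2 := by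
  rw [count_shift_eq]
  have hsub : Finset.range (n+2) ⊆ Finset.Icc 2 (n+1) ∪ {0, 1} := by
    intro i hi
    simp only [Finset.mem_range] at hi
    simp only [Finset.mem_union, Finset.mem_Icc, Finset.mem_insert,
      Finset.mem_singleton]
    omega
  calc ((Finset.range (n+2)).filter Q).card
      ≤ ((Finset.Icc 2 (n+1) ∪ {0, 1}).filter Q).card :=
        Finset.card_le_card (Finset.filter_subset_filter Q hsub)
    _ = (((Finset.Icc 2 (n+1)).filter Q) ∪ (({0, 1} : Finset ℕ).filter Q)).card := by
        rw [Finset.filter_union]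
    _ ≤ ((Finset.Icc 2 (n+1)).filter Q).card + (({0, 1} : Finset ℕ).filter Q).card :=
        Finset.card_union_le _ _
    _ ≤ ((Finset.Icc 2 (n+1)).filter Q).card + 2 := by
        have h := Finset.card_filter_le ({0, 1} : Finset ℕ) Q
        have h2 : ({0, 1} : Finset ℕ).card ≤ 2 := by decide
        omega

private lemma count_lower (Q : ℕ → Prop) [DecidablePred Q] (n : ℕ) :
    ((Finset.Icc 1 n).filter (fun k => Q (k+1))).card
      ≤ ((Finset.range (n+2)).filter Q).card := by
  rw [count_shift_eq]
  apply Finset.card_le_card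
  apply Finset.filter_subset_filter
  intro i hi
  simp only [Finset.mem_Icc] at hi
  simp only [Finset.mem_range]
  omega

private lemma ratio_lower (Q : ℕ → Prop) [DecidablePred Q] {m : ℕ} (hm : 3 ≤ m) :
    (((Finset.range m).filter Q).card : ℝ) / m - 2 / m
      ≤ (((Finset.Icc 1 (m-2)).filter (fun k => Q (k+1))).card : ℝ) / ((m-2 : ℕ) : ℝ) := by
  set n := m - 2 with hn
  have hmn : m = n + 2 := by omega
  have hnpos : (0:ℝ) < (n:ℝ) := by exact_mod_cast (by omega : 0 < n)
  have hmpos : (0:ℝ) < (m:ℝ) := by exact_mod_cast (by omega : 0 < m)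
  set c : ℕ := ((Finset.range m).filter Q).card with hc
  set d : ℕ := ((Finset.Icc 1 n).filter (fun k => Q (k+1))).card with hd
  have hcd : c ≤ d + 2 := by rw [hc, hd, hmn]; exact count_upper Q n
  have hdb : (0:ℝ) ≤ (d:ℝ) / n := div_nonneg (Nat.cast_nonneg _) (Nat.cast_nonneg _)
  rcases le_or_gt c 2 with h2 | h2
  · have : (c:ℝ) / m ≤ 2 / m := by gcongr; exact_mod_cast h2
    linarith
  · have hnum : (0:ℝ) ≤ (c:ℝ) - 2 := by
      have : (2:ℝ) ≤ (c:ℝ) := by exact_mod_cast h2.le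
      linarith
    have hnm : (n:ℝ) ≤ (m:ℝ) := by exact_mod_cast (by omega : n ≤ m)
    have h2' : ((c:ℝ) - 2) / m ≤ ((c:ℝ) - 2) / n := by gcongr
    have h3 : ((c:ℝ) - 2) / n ≤ (d:ℝ) / n := by
      gcongr
      have : (c:ℝ) ≤ (d:ℝ) + 2 := by exact_mod_cast hcd
      linarith
    have h1 : (c:ℝ) / m - 2 / m = ((c:ℝ) - 2) / m := by ring
    linarith

private lemma ratio_upper (Q : ℕ → Prop) [DecidablePred Q] {m : ℕ} (hm : 3 ≤ m) :
    (((Finset.Icc 1 (m-2)).filter (fun k => Q (k+1))).card : ℝ) / ((m-2 : ℕ) : ℝ)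
      ≤ 3 * ((((Finset.range m).filter Q).card : ℝ) / m) := by
  set n := m - 2 with hn
  have hmn : m = n + 2 := by omega
  have hnpos : (0:ℝ) < (n:ℝ) := by exact_mod_cast (by omega : 0 < n)
  have hmpos : (0:ℝ) < (m:ℝ) := by exact_mod_cast (by omega : 0 < m)
  set c : ℕ := ((Finset.range m).filter Q).card with hc
  set d : ℕ := ((Finset.Icc 1 n).filter (fun k => Q (k+1))).card with hd
  have hdc : d ≤ c := by rw [hc, hd, hmn]; exact count_lower Q n
  have h1 : (d:ℝ) / n ≤ (c:ℝ) / n := by gcongr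
  have h2 : (c:ℝ) / n ≤ 3 * ((c:ℝ) / m) := by
    have hmle : (m:ℝ) ≤ 3 * n := by exact_mod_cast (by omega : m ≤ 3 * n)
    have hc0 : (0:ℝ) ≤ (c:ℝ) := Nat.cast_nonneg _
    have key : (c:ℝ) / n ≤ (3 * c) / m := by
      rw [div_le_div_iff₀ hnpos hmpos]
      nlinarith
    calc (c:ℝ) / n ≤ (3 * c) / m := key
      _ = 3 * ((c:ℝ) / m) := by ring
  linarith


private lemma limsup_transfer (a b : ℕ → ℝ)
    (ha0 : ∀ n, 0 ≤ a n) (hb0 : ∀ n, 0 ≤ b n) (hb1 : ∀ n, b n ≤ 1)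
    (hab : ∀ m : ℕ, 3 ≤ m → a m - 2 / m ≤ b (m - 2))
    (ha : limsup a atTop = 1) : limsup b atTop = 1 := by
  have hbc : IsCoboundedUnder (· ≤ ·) atTop b :=
    isCoboundedUnder_le_of_le atTop hb0
  have hbb : IsBoundedUnder (· ≤ ·) atTop b := isBoundedUnder_of ⟨1, hb1⟩
  have hac : IsCoboundedUnder (· ≤ ·) atTop a :=
    isCoboundedUnder_le_of_le atTop ha0
  apply le_antisymm
  · exact limsup_le_of_le hbc (Eventually.of_forall hb1)
  · rw [le_limsup_iff hbc hbb]
    intro y hy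
    rw [frequently_atTop]
    intro N
    set y' : ℝ := (1 + y) / 2 with hy'
    have hy'1 : y' < 1 := by rw [hy']; linarith
    have hfreq : ∃ᶠ m in atTop, y' < a m :=
      frequently_lt_of_lt_limsup hac (by rw [ha]; exact hy'1)
    obtain ⟨N₀, hN₀⟩ : ∃ N₀ : ℕ, (4 / (1 - y) : ℝ) ≤ N₀ :=
      ⟨⌈(4 / (1 - y) : ℝ)⌉₊, Nat.le_ceil _⟩
    rw [frequently_atTop] at hfreq
    obtain ⟨m, hmge, hm⟩ := hfreq (max (N + 3) (max N₀ 3))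
    have hm3 : 3 ≤ m := le_trans (le_max_right N₀ 3) (le_trans (le_max_right _ _) hmge)
    have hmN₀ : N₀ ≤ m := le_trans (le_max_left N₀ 3) (le_trans (le_max_right _ _) hmge)
    have hmN : N + 3 ≤ m := le_trans (le_max_left _ _) hmge
    refine ⟨m - 2, by omega, ?_⟩
    have key := hab m hm3
    have h2m : (2 : ℝ) / m ≤ (1 - y) / 2 := by
      have hy1 : (0:ℝ) < 1 - y := by linarith
      have hmR : (4 / (1 - y) : ℝ) ≤ (m : ℝ) := le_trans hN₀ (by exact_mod_cast hmN₀)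
      have h4pos : (0:ℝ) < 4 / (1 - y) := by positivity
      have hmpos : (0:ℝ) < (m:ℝ) := lt_of_lt_of_le h4pos hmR
      rw [div_le_div_iff₀ hmpos (by norm_num : (0:ℝ) < 2)]
      rw [div_le_iff₀ hy1] at hmR
      linarith
    have hyy : y' - (1 - y) / 2 = y := by rw [hy']; ring
    linarith

private lemma liminf_transfer (a b : ℕ → ℝ)
    (ha1 : ∀ n, a n ≤ 1) (hb0 : ∀ n, 0 ≤ b n) (hb1 : ∀ n, b n ≤ 1)
    (hab : ∀ m : ℕ, 3 ≤ m → b (m - 2) ≤ 3 * a m)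
    (ha : liminf a atTop = 0) : liminf b atTop = 0 := by
  have hbc : IsCoboundedUnder (· ≥ ·) atTop b :=
    isCoboundedUnder_ge_of_le atTop hb1
  have hbb : IsBoundedUnder (· ≥ ·) atTop b := isBoundedUnder_of ⟨0, hb0⟩
  have hac : IsCoboundedUnder (· ≥ ·) atTop a :=
    isCoboundedUnder_ge_of_le atTop ha1
  apply le_antisymm
  · rw [liminf_le_iff hbc hbb]
    intro y hy
    rw [frequently_atTop]
    intro N
    have hfreq : ∃ᶠ m in atTop, a m < y / 3 :=
      frequently_lt_of_liminf_lt hac (by rw [ha]; positivity)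
    rw [frequently_atTop] at hfreq
    obtain ⟨m, hmge, hm⟩ := hfreq (N + 3)
    refine ⟨m - 2, by omega, ?_⟩
    have key := hab m (by omega)
    linarith
  · exact le_liminf_of_le hbc (Eventually.of_forall hb0)

private lemma frac_le_one {c n : ℕ} (h : c ≤ n) : (c:ℝ)/n ≤ 1 := by
  rcases Nat.eq_zero_or_pos n with h0 | h0
  · subst h0
    have : c = 0 := by omega
    simp [this]
  · rw [div_le_one (by exact_mod_cast h0)]
    exact_mod_cast h

/-- Distributional chaos of type 1 implies distributional chaos in a sequence. -/
theorem dc1_implies_dc_in_sequence {X : Type*} [MetricSpace X] [CompactSpace X]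
    (f : X → X) (hf : Continuous f) (D : Set X) (hD : ¬ D.Countable)
    (hpairs : ∀ x ∈ D, ∀ y ∈ D, x ≠ y →
      (∀ t > 0, limsup (fun n : ℕ =>
          (((Finset.range n).filter
            (fun i => dist (f^[i] x) (f^[i] y) < t)).card : ℝ) / n) atTop = 1) ∧
      (∃ s > 0, liminf (fun n : ℕ =>
          (((Finset.range n).filter
            (fun i => dist (f^[i] x) (f^[i] y) < s)).card : ℝ) / n) atTop = 0)) :
    ∃ p : ℕ → ℕ, StrictMono p ∧ (∀ k, 0 < p k) ∧
      ∃ D' : Set X, ¬ D'.Countable ∧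
        ∀ x ∈ D', ∀ y ∈ D', x ≠ y →
          (∀ t > 0, limsup (fun n : ℕ =>
              (((Finset.Icc 1 n).filter
                (fun k => dist (f^[p k] x) (f^[p k] y) < t)).card : ℝ) / n)
              atTop = 1) ∧
          (∃ ε > 0, liminf (fun n : ℕ =>
              (((Finset.Icc 1 n).filter
                (fun k => dist (f^[p k] x) (f^[p k] y) < ε)).card : ℝ) / n)
              atTop = 0) := by
  refine ⟨fun k => k + 1, fun _ _ h => by simpa using h, fun k => Nat.succ_pos k, D, hD, ?_⟩
  intro x hx y hy hxy
  obtain ⟨h1, s, hs, h2⟩ := hpairs x hx y hy hxy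
  constructor
  · intro t ht
    apply limsup_transfer
      (fun n : ℕ => (((Finset.range n).filter
        (fun i => dist (f^[i] x) (f^[i] y) < t)).card : ℝ) / n)
    · intro n; positivity
    · intro n; positivity
    · intro n
      apply frac_le_one
      calc ((Finset.Icc 1 n).filter _).card ≤ (Finset.Icc 1 n).card :=
            Finset.card_filter_le _ _
        _ = n := by rw [Nat.card_Icc]; omega
    · intro m hm
      exact ratio_lower (fun i => dist (f^[i] x) (f^[i] y) < t) hm
    · exact h1 t ht
  · refine ⟨s, hs, ?_⟩
    apply liminf_transfer
      (fun n : ℕ => (((Finset.range n).filter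
        (fun i => dist (f^[i] x) (f^[i] y) < s)).card : ℝ) / n)
    · intro n
      apply frac_le_one
      calc ((Finset.range n).filter _).card ≤ (Finset.range n).card :=
            Finset.card_filter_le _ _
        _ = n := Finset.card_range n
    · intro n; positivity
    · intro n
      apply frac_le_one
      calc ((Finset.Icc 1 n).filter _).card ≤ (Finset.Icc 1 n).card :=
            Finset.card_filter_le _ _
        _ = n := by rw [Nat.card_Icc]; omega
    · intro m hm
      exact ratio_upper (fun i => dist (f^[i] x) (f^[i] y) < s) hm
    · exact h2
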